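/- Let A be a compact positive self-adjoint operator on a Hilbert space, let β > 0, let 1 ≤ l ≤ T be integers, and let η_l, ..., η_T be positive reals with η_t‖A‖ < 1 for all l ≤ t ≤ T. Then the operator norm of A^β ∏_{j=l}^{T}(I − η_j A)^2 is at most (β/(2e))^β (∑_{j=l}^{T} η_j)^{−β}. -/

import Mathlib

open scoped RealInnerProductSpace

/-- Core scalar bound: `u^β e^{-2Su} ≤ (β/(2e))^β S^{-β}`. -/
lemma core_bound {β S u : ℝ} (hβ : 0 < β) (hS : 0 < S) (hu : 0 ≤ u) :
    u ^ β * Real.exp (-(2 * S * u)) ≤ (β / (2 * Real.exp 1)) ^ β * S ^ (-β) := by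
  have he : (0:ℝ) < Real.exp 1 := Real.exp_pos 1
  set t : ℝ := 2 * S * u / β with ht
  have ht0 : 0 ≤ t := by positivity
  have hut : u = β / (2 * S) * t := by
    rw [ht]; field_simp
  have h1 : u ^ β = (β / (2 * S)) ^ β * t ^ β := by
    rw [hut, Real.mul_rpow (by positivity) ht0]
  have h2 : t ^ β ≤ Real.exp ((t - 1) * β) := by
    calc t ^ β ≤ (Real.exp (t - 1)) ^ β :=
          Real.rpow_le_rpow ht0 (by linarith [Real.add_one_le_exp (t - 1)]) hβ.le
      _ = Real.exp ((t - 1) * β) := by rw [← Real.exp_mul]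
  have htβ : t * β = 2 * S * u := by rw [ht]; field_simp
  have key : u ^ β * Real.exp (-(2 * S * u)) ≤ (β / (2 * S)) ^ β * Real.exp (-β) := by
    rw [h1, mul_assoc]
    refine mul_le_mul_of_nonneg_left ?_ (by positivity)
    calc t ^ β * Real.exp (-(2 * S * u))
        ≤ Real.exp ((t - 1) * β) * Real.exp (-(2 * S * u)) :=
          mul_le_mul_of_nonneg_right h2 (Real.exp_pos _).le
      _ = Real.exp ((t - 1) * β + -(2 * S * u)) := (Real.exp_add _ _).symm
      _ = Real.exp (-β) := by rw [sub_mul, one_mul, htβ]; ring_nf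
  refine key.trans (le_of_eq ?_)
  have hSβ : (0:ℝ) < S ^ β := Real.rpow_pos_of_pos hS β
  have h2β : (0:ℝ) < (2:ℝ) ^ β := Real.rpow_pos_of_pos (by norm_num) β
  have heβ : (0:ℝ) < Real.exp β := Real.exp_pos β
  rw [Real.div_rpow hβ.le (by positivity), Real.div_rpow hβ.le (by positivity),
      Real.mul_rpow (by norm_num : (0:ℝ) ≤ 2) hS.le,
      Real.mul_rpow (by norm_num : (0:ℝ) ≤ 2) he.le,
      Real.exp_one_rpow, Real.rpow_neg hS.le, Real.exp_neg]
  field_simp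

/-- bound `‖A^β ∏_{j=l}^T (I - η_j A)^2‖ ≤ (β/(2e))^β (∑_{j=l}^T η_j)^{-β}`
for a compact positive operator `A` on a Hilbert space, where `A^β` is defined via the
continuous functional calculus. -/
theorem stmt_0 {H : Type*} [NormedAddCommGroup H] [InnerProductSpace ℂ H] [CompleteSpace H]
    (A : H →L[ℂ] H) (hA : IsCompactOperator (⇑A)) (hpos : A.IsPositive)
    (β : ℝ) (hβ : 0 < β) (l T : ℕ) (hl : 1 ≤ l) (hlT : l ≤ T)
    (η : ℕ → ℝ) (hη : ∀ t, l ≤ t → t ≤ T → 0 < η t)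
    (hηA : ∀ t, l ≤ t → t ≤ T → η t * ‖A‖ < 1) :
    ‖cfc (fun u : ℝ => u ^ β) A *
        ((List.range (T + 1 - l)).map (fun k => (1 - ((η (l + k) : ℂ)) • A) ^ 2)).prod‖ ≤
      (β / (2 * Real.exp 1)) ^ β * (∑ j ∈ Finset.Icc l T, η j) ^ (-β) := by
  classical
  have hsa : IsSelfAdjoint A := hpos.isSelfAdjoint
  set S : ℝ := ∑ j ∈ Finset.Icc l T, η j with hSdef
  have hS : 0 < S := by
    refine Finset.sum_pos (fun j hj => ?_) ⟨l, Finset.mem_Icc.mpr ⟨le_refl l, hlT⟩⟩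
    exact hη j (Finset.mem_Icc.mp hj).1 (Finset.mem_Icc.mp hj).2
  have hc : (0:ℝ) ≤ (β / (2 * Real.exp 1)) ^ β * S ^ (-β) := by
    have := Real.exp_pos 1
    exact mul_nonneg (Real.rpow_nonneg (by positivity) β) (Real.rpow_nonneg hS.le _)
  rcases subsingleton_or_nontrivial H with hH | hH
  · have h0 : (cfc (fun u : ℝ => u ^ β) A *
        ((List.range (T + 1 - l)).map (fun k => (1 - ((η (l + k) : ℂ)) • A) ^ 2)).prod)
        = 0 := Subsingleton.elim _ _
    rw [h0, norm_zero]
    exact hc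
  set n : ℕ := T + 1 - l with hn
  -- each factor is a `cfc`
  have factor : ∀ m : ℕ, cfc (fun u : ℝ => (1 - η (l + m) * u) ^ 2) A
      = (1 - ((η (l + m) : ℂ)) • A) ^ 2 := by
    intro m
    rw [Complex.coe_smul]
    rw [cfc_pow (fun u : ℝ => 1 - η (l + m) * u) 2 A (by fun_prop)]
    congr 1
    rw [cfc_sub (fun _ : ℝ => 1) (fun u : ℝ => η (l + m) * u) A (by fun_prop) (by fun_prop),
      cfc_const_mul_id (η (l + m)) A, cfc_const 1 A, map_one]
  -- the whole product is a `cfc`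
  have hprod : ∀ m : ℕ,
      ((List.range m).map (fun k => (1 - ((η (l + k) : ℂ)) • A) ^ 2)).prod
        = cfc (fun u : ℝ => ∏ k ∈ Finset.range m, (1 - η (l + k) * u) ^ 2) A := by
    intro m
    induction m with
    | zero => simpa using (cfc_const_one ℝ A).symm
    | succ m ih =>
      rw [List.range_succ, List.map_append, List.prod_append, ih]
      simp only [List.map_cons, List.map_nil, List.prod_cons, List.prod_nil, mul_one]
      have hcont : ∀ m' : ℕ, ContinuousOn
          (fun u : ℝ => ∏ k ∈ Finset.range m', (1 - η (l + k) * u) ^ 2) (spectrum ℝ A) :=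
        fun m' => (continuous_finset_prod _ fun i _ => by fun_prop).continuousOn
      rw [← factor m, ← cfc_mul _ _ A (hcont m) (by fun_prop)]
      exact cfc_congr fun u _ => (Finset.prod_range_succ _ m).symm
  have hcont1 : ContinuousOn (fun u : ℝ => u ^ β) (spectrum ℝ A) :=
    (Real.continuous_rpow_const hβ.le).continuousOn
  have hcontP : ContinuousOn
      (fun u : ℝ => ∏ k ∈ Finset.range n, (1 - η (l + k) * u) ^ 2) (spectrum ℝ A) :=
    (continuous_finset_prod _ fun i _ => by fun_prop).continuousOn
  rw [hprod n, ← cfc_mul _ _ A hcont1 hcontP]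
  -- sum over the range equals S
  have hsumS : ∑ k ∈ Finset.range n, η (l + k) = S := by
    rw [hSdef, ← Finset.Ico_add_one_right_eq_Icc, Finset.sum_Ico_eq_sum_range]
  -- pointwise bound on the spectrum
  refine norm_cfc_le hc fun x hx => ?_
  have hx0 : 0 ≤ x := SpectrumRestricts.nnreal_iff.mp hpos.spectrumRestricts x hx
  have hxA : x ≤ ‖A‖ := by
    have := spectrum.norm_le_norm_of_mem hx
    rwa [Real.norm_eq_abs, abs_of_nonneg hx0] at this
  have hP0 : 0 ≤ ∏ k ∈ Finset.range n, (1 - η (l + k) * x) ^ 2 :=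
    Finset.prod_nonneg fun i _ => sq_nonneg _
  rw [Real.norm_eq_abs, abs_of_nonneg (mul_nonneg (Real.rpow_nonneg hx0 β) hP0)]
  have step : ∀ i ∈ Finset.range n,
      (1 - η (l + i) * x) ^ 2 ≤ Real.exp (-(2 * η (l + i) * x)) := by
    intro i hi
    have hi' : l + i ≤ T := by
      have := Finset.mem_range.mp hi
      omega
    have hηi := hη (l + i) (Nat.le_add_right l i) hi'
    have hηAi := hηA (l + i) (Nat.le_add_right l i) hi'
    have hx1 : η (l + i) * x < 1 := by
      calc η (l + i) * x ≤ η (l + i) * ‖A‖ := by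
            exact mul_le_mul_of_nonneg_left hxA hηi.le
        _ < 1 := hηAi
    have h0 : 0 ≤ 1 - η (l + i) * x := by linarith
    have h1 : 1 - η (l + i) * x ≤ Real.exp (-(η (l + i) * x)) := by
      linarith [Real.add_one_le_exp (-(η (l + i) * x))]
    calc (1 - η (l + i) * x) ^ 2 ≤ (Real.exp (-(η (l + i) * x))) ^ 2 :=
          pow_le_pow_left₀ h0 h1 2
      _ = Real.exp (-(2 * η (l + i) * x)) := by
          rw [sq, ← Real.exp_add]; ring_nf
  have hPexp : ∏ k ∈ Finset.range n, (1 - η (l + k) * x) ^ 2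
      ≤ Real.exp (-(2 * S * x)) := by
    calc ∏ k ∈ Finset.range n, (1 - η (l + k) * x) ^ 2
        ≤ ∏ k ∈ Finset.range n, Real.exp (-(2 * η (l + k) * x)) :=
          Finset.prod_le_prod (fun i _ => sq_nonneg _) step
      _ = Real.exp (∑ k ∈ Finset.range n, -(2 * η (l + k) * x)) :=
          (Real.exp_sum _ _).symm
      _ = Real.exp (-(2 * S * x)) := by
          congr 1
          have : ∀ k, -(2 * η (l + k) * x) = η (l + k) * (-(2 * x)) := fun k => by ring
          simp_rw [this, ← Finset.sum_mul, hsumS]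
          ring
  calc x ^ β * ∏ k ∈ Finset.range n, (1 - η (l + k) * x) ^ 2
      ≤ x ^ β * Real.exp (-(2 * S * x)) :=
        mul_le_mul_of_nonneg_left hPexp (Real.rpow_nonneg hx0 β)
    _ ≤ (β / (2 * Real.exp 1)) ^ β * S ^ (-β) := core_bound hβ hS hx0
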